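/- For 0 ≤ r < 1, the double integral (1/(2π)²)∫₀^{2π}∫₀^{2π} 1/|2 - re^{iθ} - re^{iφ}|² dφ dθ equals 1/(4√(1-r²)). In particular, this quantity tends to infinity as r → 1⁻, so 1/(2-z-w) is not in L²(𝕋²). -/

import Mathlib

open Real Filter

open intervalIntegral Metric

lemma key_integral (A : ℂ) {r : ℝ} (hr : 0 ≤ r) (h : r < ‖A‖) :
    ∫ φ in (0:ℝ)..(2 * π), 1 / ‖A - r * Complex.exp (φ * Complex.I)‖ ^ 2
      = 2 * π / (‖A‖ ^ 2 - r ^ 2) := by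
  have hA : A ≠ 0 := by
    intro h0; rw [h0] at h; simp at h; linarith
  have hcA : (starRingEnd ℂ) A ≠ 0 := by simpa using hA
  set w : ℂ := (r : ℂ) / (starRingEnd ℂ) A with hw_def
  have hw : w ∈ ball (0 : ℂ) 1 := by
    simp only [mem_ball, dist_zero_right, hw_def, norm_div, Complex.norm_conj, Complex.norm_of_nonneg hr]
    rw [div_lt_one (lt_of_le_of_lt hr h)]
    exact h
  set f : ℂ → ℂ := fun z => (((starRingEnd ℂ) A)⁻¹ : ℂ) * (A - r * z)⁻¹ with hf_def
  have hne : ∀ z ∈ closedBall (0 : ℂ) 1, A - r * z ≠ 0 := by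
    intro z hz h0
    have : ‖A‖ = ‖(r : ℂ) * z‖ := by
      rw [← sub_eq_zero.mp h0]
    rw [norm_mul, Complex.norm_of_nonneg hr] at this
    have hz1 : ‖z‖ ≤ 1 := by simpa [Complex.dist_eq] using hz
    nlinarith [norm_nonneg z]
  have hdiff : DifferentiableOn ℂ f (closedBall 0 1) := by
    apply DifferentiableOn.const_mul
    exact DifferentiableOn.inv (by fun_prop) hne
  have cauchy := hdiff.circleIntegral_sub_inv_smul hw
  have hfw : f w = ((‖A‖ ^ 2 - r ^ 2 : ℝ) : ℂ)⁻¹ := by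
    have hmk : A * (starRingEnd ℂ) A = ((‖A‖ ^ 2 : ℝ) : ℂ) := by
      rw [Complex.mul_conj, Complex.sq_norm]
    have hne2 : ((‖A‖ ^ 2 - r ^ 2 : ℝ) : ℂ) ≠ 0 := by
      simp only [ne_eq, Complex.ofReal_eq_zero]
      nlinarith
    rw [hf_def, hw_def]
    field_simp
    rw [mul_comm ((starRingEnd ℂ) A) A, hmk, ← Complex.ofReal_pow, ← Complex.ofReal_sub, div_self hne2]
  -- pointwise identity
  have hpt : ∀ θ : ℝ, (deriv (circleMap 0 1) θ) • ((circleMap 0 1 θ - w)⁻¹ • f (circleMap 0 1 θ))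
      = Complex.I * ((‖A - r * Complex.exp (θ * Complex.I)‖ ^ 2 : ℝ) : ℂ)⁻¹ := by
    intro θ
    have hz : circleMap 0 1 θ = Complex.exp (θ * Complex.I) := by
      simp [circleMap]
    set z := Complex.exp (θ * Complex.I) with hzdef
    have hz0 : z ≠ 0 := Complex.exp_ne_zero _
    have hzabs : ‖z‖ = 1 := by
      rw [hzdef]; simpa using Complex.norm_exp_ofReal_mul_I θ
    have hconjz : (starRingEnd ℂ) z = z⁻¹ := by
      rw [hzdef, ← Complex.exp_conj, map_mul, Complex.conj_I, Complex.conj_ofReal, mul_neg,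
        Complex.exp_neg]
    have hmz : (A - r * z) * (starRingEnd ℂ) (A - r * z)
        = ((‖A - r * z‖ ^ 2 : ℝ) : ℂ) := by
      rw [Complex.mul_conj, Complex.sq_norm]
    have hAz : A - r * z ≠ 0 := hne z (by simp [mem_closedBall, Complex.dist_eq, hzabs])
    have hcAz : (starRingEnd ℂ) (A - r * z) ≠ 0 := by simpa only [ne_eq, map_eq_zero] using hAz
    have hzw : z - w ≠ 0 := by
      intro h0
      have h1 : ‖w‖ < 1 := by simpa [Complex.dist_eq] using hw
      have h2 : ‖z‖ = ‖w‖ := by rw [sub_eq_zero.mp h0]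
      rw [hzabs] at h2; rw [← h2] at h1; exact lt_irrefl 1 h1
    rw [deriv_circleMap, hz, smul_eq_mul, smul_eq_mul, hf_def, hw_def, ← hmz]
    have hconjsub : (starRingEnd ℂ) (A - r * z) = ((starRingEnd ℂ) A * z - r) * z⁻¹ := by
      rw [map_sub, map_mul, hconjz, Complex.conj_ofReal]
      field_simp
    have hu : (starRingEnd ℂ) A * z - r ≠ 0 := by
      intro h0
      apply hcAz
      rw [hconjsub, h0, zero_mul]
    have hzw' : z - w = ((starRingEnd ℂ) A * z - r) / (starRingEnd ℂ) A := by
      rw [hw_def]; field_simp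
    rw [hconjsub, hzw']
    field_simp
  rw [circleIntegral] at cauchy
  rw [intervalIntegral.integral_congr (g := fun θ : ℝ => Complex.I *
      ((‖A - r * Complex.exp (θ * Complex.I)‖ ^ 2 : ℝ) : ℂ)⁻¹)
      (fun θ _ => hpt θ)] at cauchy
  rw [intervalIntegral.integral_const_mul, hfw, smul_eq_mul] at cauchy
  have key : ∫ θ in (0:ℝ)..(2*π),
      ((‖A - r * Complex.exp (θ * Complex.I)‖ ^ 2 : ℝ) : ℂ)⁻¹
      = 2 * π * ((‖A‖ ^ 2 - r ^ 2 : ℝ) : ℂ)⁻¹ := by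
    apply mul_left_cancel₀ Complex.I_ne_zero
    rw [cauchy]; ring
  apply Complex.ofReal_injective
  rw [← intervalIntegral.integral_ofReal]
  push_cast
  rw [intervalIntegral.integral_congr (g := fun θ : ℝ =>
      ((‖A - r * Complex.exp (θ * Complex.I)‖ ^ 2 : ℝ) : ℂ)⁻¹)
      (fun θ _ => by push_cast; ring)]
  rw [key]
  push_cast
  ring

lemma aux_sq_abs (ρ θ : ℝ) :
    ‖(1 : ℂ) - ρ * Complex.exp (θ * Complex.I)‖ ^ 2
      = 1 - 2 * ρ * Real.cos θ + ρ ^ 2 := by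
  rw [Complex.sq_norm, Complex.normSq_apply, Complex.exp_mul_I]
  simp [Complex.sub_re, Complex.sub_im, Complex.mul_re, Complex.mul_im,
    Complex.cos_ofReal_re, Complex.sin_ofReal_re]
  nlinarith [Real.sin_sq_add_cos_sq θ]

lemma aux_sq_abs2 (r θ : ℝ) :
    ‖(2 : ℂ) - r * Complex.exp (θ * Complex.I)‖ ^ 2
      = 4 - 4 * r * Real.cos θ + r ^ 2 := by
  rw [Complex.sq_norm, Complex.normSq_apply, Complex.exp_mul_I]
  simp [Complex.sub_re, Complex.sub_im, Complex.mul_re, Complex.mul_im,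
    Complex.cos_ofReal_re, Complex.sin_ofReal_re]
  nlinarith [Real.sin_sq_add_cos_sq θ]

lemma part1 (r : ℝ) (hr : 0 ≤ r) (hr1 : r < 1) :
    (1 / (2 * π) ^ 2) * ∫ θ in (0:ℝ)..(2 * π), ∫ φ in (0:ℝ)..(2 * π),
        1 / ‖2 - r * Complex.exp (θ * Complex.I)
            - r * Complex.exp (φ * Complex.I)‖ ^ 2 =
      1 / (4 * Real.sqrt (1 - r ^ 2)) := by
  have hπ : (0:ℝ) < π := Real.pi_pos
  -- inner integral
  have hinner : ∀ θ : ℝ, (∫ φ in (0:ℝ)..(2 * π),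
      1 / ‖2 - r * Complex.exp (θ * Complex.I)
          - r * Complex.exp (φ * Complex.I)‖ ^ 2)
      = 2 * π / (4 - 4 * r * Real.cos θ) := by
    intro θ
    have habs : r < ‖2 - r * Complex.exp (θ * Complex.I)‖ := by
      have h1 : ‖(2:ℂ)‖ - ‖(r : ℂ) * Complex.exp (θ * Complex.I)‖
          ≤ ‖(2:ℂ) - r * Complex.exp (θ * Complex.I)‖ := norm_sub_norm_le _ _
      have h2 : ‖(r : ℂ) * Complex.exp (θ * Complex.I)‖ = r := by
        simp [abs_of_nonneg hr, Complex.norm_exp_ofReal_mul_I]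
      rw [h2] at h1
      have : ‖(2:ℂ)‖ = 2 := by simp
      rw [this] at h1
      linarith
    rw [key_integral (2 - r * Complex.exp (θ * Complex.I)) hr habs, aux_sq_abs2]
    ring_nf
  rw [intervalIntegral.integral_congr (fun θ _ => hinner θ)]
  rcases eq_or_lt_of_le hr with hr0 | hr0
  · -- r = 0
    subst hr0
    simp [intervalIntegral.integral_const]
    field_simp
  · -- 0 < r
    have h1r2 : (0:ℝ) < 1 - r ^ 2 := by nlinarith
    set s : ℝ := Real.sqrt (1 - r ^ 2) with hs_def
    have hs0 : 0 < s := Real.sqrt_pos.mpr h1r2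
    have hs2 : s ^ 2 = 1 - r ^ 2 := Real.sq_sqrt h1r2.le
    have hs1 : s < 1 := by nlinarith
    set ρ : ℝ := (1 - s) / r with hρ_def
    have hρ0 : 0 ≤ ρ := div_nonneg (by linarith) hr0.le
    have hρ1 : ρ < 1 := by
      rw [hρ_def, div_lt_one hr0]
      nlinarith
    have hrel : r * (1 + ρ ^ 2) = 2 * ρ := by
      rw [hρ_def]
      field_simp
      nlinarith
    have hptw : ∀ θ : ℝ, 2 * π / (4 - 4 * r * Real.cos θ)
        = (π * (1 + ρ ^ 2) / 2) * (1 / ‖(1:ℂ) - ρ * Complex.exp (θ * Complex.I)‖ ^ 2) := by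
      intro θ
      rw [aux_sq_abs]
      have hc1 : Real.cos θ ≤ 1 := Real.cos_le_one θ
      have hc2 : -1 ≤ Real.cos θ := Real.neg_one_le_cos θ
      have hd1 : (0:ℝ) < 4 - 4 * r * Real.cos θ := by nlinarith
      have hd2 : (0:ℝ) < 1 - 2 * ρ * Real.cos θ + ρ ^ 2 := by nlinarith [sq_nonneg (1 - ρ)]
      rw [div_eq_iff hd1.ne']
      clear_value ρ s
      field_simp
      linear_combination (4 * Real.cos θ) * hrel
    rw [intervalIntegral.integral_congr (fun θ _ => hptw θ),
      intervalIntegral.integral_const_mul,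
      key_integral 1 hρ0 (by simpa using hρ1)]
    have habs1 : ‖(1:ℂ)‖ = 1 := by simp
    rw [habs1]
    have hρ2 : s * (1 + ρ ^ 2) = 1 - ρ ^ 2 := by
      rw [hρ_def]
      field_simp
      nlinarith
    have h1mρ : (0:ℝ) < 1 - ρ ^ 2 := by nlinarith
    have step : (1:ℝ) / (2 * π) ^ 2 * (π * (1 + ρ ^ 2) / 2 * (2 * π / (1 ^ 2 - ρ ^ 2)))
        = (1 + ρ ^ 2) / (4 * (1 - ρ ^ 2)) := by
      field_simp
      ring
    rw [step, div_eq_div_iff (by positivity) (by positivity)]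
    linear_combination 4 * hρ2

theorem bernstein_szego_measure_infinite_mass :
    (∀ r : ℝ, 0 ≤ r → r < 1 →
      (1 / (2 * π) ^ 2) * ∫ θ in (0:ℝ)..(2 * π), ∫ φ in (0:ℝ)..(2 * π),
          1 / ‖2 - r * Complex.exp (θ * Complex.I)
              - r * Complex.exp (φ * Complex.I)‖ ^ 2 =
        1 / (4 * Real.sqrt (1 - r ^ 2))) ∧
    Tendsto (fun r : ℝ =>
      (1 / (2 * π) ^ 2) * ∫ θ in (0:ℝ)..(2 * π), ∫ φ in (0:ℝ)..(2 * π),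
          1 / ‖2 - r * Complex.exp (θ * Complex.I)
              - r * Complex.exp (φ * Complex.I)‖ ^ 2)
      (nhdsWithin 1 (Set.Ico 0 1)) atTop := by
  constructor
  · exact part1
  · have h1 : Tendsto (fun r : ℝ => 4 * Real.sqrt (1 - r ^ 2))
        (nhdsWithin 1 (Set.Ico 0 1)) (nhdsWithin 0 (Set.Ioi 0)) := by
      apply tendsto_nhdsWithin_of_tendsto_nhds_of_eventually_within
      · have hc : Continuous (fun r : ℝ => 4 * Real.sqrt (1 - r ^ 2)) :=
          continuous_const.mul (Real.continuous_sqrt.comp (continuous_const.sub (continuous_pow 2)))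
        have := (hc.tendsto 1).mono_left (nhdsWithin_le_nhds (s := Set.Ico 0 1))
        simpa using this
      · filter_upwards [self_mem_nhdsWithin] with r hr
        have : (0:ℝ) < 1 - r ^ 2 := by nlinarith [hr.1, hr.2]
        have := Real.sqrt_pos.mpr this
        simp only [Set.mem_Ioi]
        positivity
    have h2 := tendsto_inv_nhdsGT_zero.comp h1
    apply Tendsto.congr' _ h2
    filter_upwards [self_mem_nhdsWithin] with r hr
    rw [Function.comp_apply, part1 r hr.1 hr.2, one_div]
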